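/- Let D be an invertible real m×m matrix and B : ℝ → M_m(ℝ) a continuous matrix-valued function with D B(x) = B(x) D for all x. If U : ℝ → M_m(ℝ) is differentiable with U′(x) = −(1/2)D⁻¹B(x)U(x) and U(0) = E, then D U(x) = U(x) D for all x. (core of Lemma 3.6) -/

import Mathlib

open Matrix

attribute [local instance] Matrix.normedAddCommGroup Matrix.normedSpace

private lemma norm_mat_mul_le {m : ℕ} (A M : Matrix (Fin m) (Fin m) ℝ) :
    ‖A * M‖ ≤ (m : ℝ) * ‖A‖ * ‖M‖ := by
  have h0 : (0 : ℝ) ≤ (m : ℝ) * ‖A‖ * ‖M‖ := by positivity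
  rw [Matrix.norm_le_iff h0]
  intro i j
  calc ‖(A * M) i j‖ = ‖∑ k, A i k * M k j‖ := by rw [Matrix.mul_apply]
    _ ≤ ∑ k, ‖A i k * M k j‖ := norm_sum_le _ _
    _ ≤ ∑ _k : Fin m, ‖A‖ * ‖M‖ := by
        refine Finset.sum_le_sum fun k _ => ?_
        rw [norm_mul]
        exact mul_le_mul (Matrix.norm_entry_le_entrywise_sup_norm A)
          (Matrix.norm_entry_le_entrywise_sup_norm M) (norm_nonneg _) (norm_nonneg _)
    _ = (m : ℝ) * ‖A‖ * ‖M‖ := by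
        simp [Finset.sum_const, mul_assoc]

/-- A solution of a linear homogeneous matrix ODE with zero initial value vanishes
for nonnegative times. -/
private lemma linear_ode_zero {m : ℕ} (A : ℝ → Matrix (Fin m) (Fin m) ℝ)
    (hA : Continuous A) (W : ℝ → Matrix (Fin m) (Fin m) ℝ)
    (hW : ∀ x : ℝ, HasDerivAt W (A x * W x) x) (hW0 : W 0 = 0) :
    ∀ x : ℝ, 0 ≤ x → W x = 0 := by
  intro b hb
  -- bound ‖A t‖ on [0, b]
  obtain ⟨C, hC⟩ : ∃ C, ∀ t ∈ Set.Icc (0:ℝ) b, ‖A t‖ ≤ C := by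
    obtain ⟨C, hC⟩ := (isCompact_Icc (a := (0:ℝ)) (b := b)).exists_bound_of_continuousOn
      (hA.continuousOn.norm)
    exact ⟨C, fun t ht => by simpa using hC t ht⟩
  have hC0 : (0 : ℝ) ≤ C := le_trans (norm_nonneg _) (hC 0 ⟨le_refl _, hb⟩)
  set K : ℝ := (m : ℝ) * C with hK
  have key : ∀ x ∈ Set.Icc (0:ℝ) b, ‖W x‖ ≤ gronwallBound 0 K 0 (x - 0) := by
    apply norm_le_gronwallBound_of_norm_deriv_right_le
    · exact (fun t _ => ((hW t).continuousAt).continuousWithinAt)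
    · exact fun t _ => (hW t).hasDerivWithinAt
    · simp [hW0]
    · intro t ht
      have h1 : ‖A t * W t‖ ≤ (m : ℝ) * ‖A t‖ * ‖W t‖ := norm_mat_mul_le _ _
      have h2 : (m : ℝ) * ‖A t‖ * ‖W t‖ ≤ K * ‖W t‖ := by
        apply mul_le_mul_of_nonneg_right _ (norm_nonneg _)
        exact mul_le_mul_of_nonneg_left (hC t ⟨ht.1, le_of_lt ht.2⟩) (by positivity)
      linarith
  have := key b ⟨hb, le_refl _⟩
  rw [gronwallBound_ε0_δ0] at this
  exact norm_le_zero_iff.mp this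

private lemma linear_ode_zero' {m : ℕ} (A : ℝ → Matrix (Fin m) (Fin m) ℝ)
    (hA : Continuous A) (W : ℝ → Matrix (Fin m) (Fin m) ℝ)
    (hW : ∀ x : ℝ, HasDerivAt W (A x * W x) x) (hW0 : W 0 = 0) :
    ∀ x : ℝ, W x = 0 := by
  intro x
  rcases le_or_gt 0 x with hx | hx
  · exact linear_ode_zero A hA W hW hW0 x hx
  · -- reflect time
    have h := linear_ode_zero (fun t => -(A (-t))) ((hA.comp continuous_neg).neg)
      (fun t => W (-t)) ?_ (by simpa using hW0) (-x) (by linarith)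
    · simpa using h
    · intro t
      have h1 : HasDerivAt (fun t : ℝ => W (-t)) ((-1 : ℝ) • (A (-t) * W (-t))) t := by
        have := (hW (-t)).scomp t (hasDerivAt_neg t)
        exact this
      convert h1 using 1
      simp [Matrix.neg_mul]

/-- Core of Lemma 3.6: if `D` is invertible, `B` is continuous with `D B(x) = B(x) D`
for all `x`, and `U` solves `U′ = −(1/2)D⁻¹B(x)U`, `U(0) = E`, then `D U(x) = U(x) D`
for all `x`. -/
theorem stmt7 (m : ℕ) (hm : 1 ≤ m)
    (D : Matrix (Fin m) (Fin m) ℝ) (hD : IsUnit D.det)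
    (B : ℝ → Matrix (Fin m) (Fin m) ℝ) (hBcont : Continuous B)
    (hDB : ∀ x : ℝ, D * B x = B x * D)
    (U : ℝ → Matrix (Fin m) (Fin m) ℝ)
    (hU : ∀ x : ℝ, HasDerivAt U (-(1/2 : ℝ) • (D⁻¹ * B x * U x)) x)
    (hU0 : U 0 = 1) :
    ∀ x : ℝ, D * U x = U x * D := by
  have hDD : D * D⁻¹ = 1 := Matrix.mul_nonsing_inv D hD
  have hDinvB : ∀ x, D⁻¹ * B x * D = B x := by
    intro x
    have : D⁻¹ * (D * B x) = B x := by
      rw [← Matrix.mul_assoc, Matrix.nonsing_inv_mul D hD, Matrix.one_mul]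
    calc D⁻¹ * B x * D = D⁻¹ * (B x * D) := by rw [Matrix.mul_assoc]
      _ = D⁻¹ * (D * B x) := by rw [hDB x]
      _ = B x := this
  set A : ℝ → Matrix (Fin m) (Fin m) ℝ := fun x => (-(1/2 : ℝ)) • (D⁻¹ * B x) with hAdef
  have hAcont : Continuous A := by
    show Continuous fun x => (-(1/2 : ℝ)) • (D⁻¹ * B x)
    exact (continuous_const.mul hBcont).const_smul (-(1/2 : ℝ))
  set W : ℝ → Matrix (Fin m) (Fin m) ℝ := fun x => D * U x - U x * D with hWdef
  have hW0 : W 0 = 0 := by simp [hWdef, hU0]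
  have hW : ∀ x : ℝ, HasDerivAt W (A x * W x) x := by
    intro x
    have h1 : HasDerivAt (fun y => D * U y)
        (D * (-(1/2 : ℝ) • (D⁻¹ * B x * U x))) x := by
      have := ((LinearMap.mulLeft ℝ D).toContinuousLinearMap.hasFDerivAt).comp_hasDerivAt
        x (hU x)
      exact this
    have h2 : HasDerivAt (fun y => U y * D)
        ((-(1/2 : ℝ) • (D⁻¹ * B x * U x)) * D) x := by
      have := ((LinearMap.mulRight ℝ D).toContinuousLinearMap.hasFDerivAt).comp_hasDerivAt
        x (hU x)
      exact this
    have h3 := h1.sub h2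
    refine h3.congr_deriv (Eq.symm ?_)
    rw [hAdef, hWdef]
    have hcancel : ∀ M : Matrix (Fin m) (Fin m) ℝ, D * (D⁻¹ * M) = M := fun M => by
      rw [← Matrix.mul_assoc, hDD, Matrix.one_mul]
    have hswap : ∀ M : Matrix (Fin m) (Fin m) ℝ, D⁻¹ * (B x * (D * M)) = B x * M :=
      fun M => by rw [← Matrix.mul_assoc, ← Matrix.mul_assoc, hDinvB x]
    simp only [Matrix.mul_smul, Matrix.smul_mul, Matrix.mul_sub, smul_sub,
      Matrix.mul_assoc, hswap, hcancel]
  have := linear_ode_zero' A hAcont W hW hW0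
  intro x
  have hx := this x
  rw [hWdef] at hx
  exact sub_eq_zero.mp hx
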